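/- The twisting operation on quasi-Lie bialgebra structures is functorial: if λ twists (δ₁,φ₁) into (δ₂,φ₂) and μ twists (δ₂,φ₂) into (δ₃,φ₃), then λ+μ twists (δ₁,φ₁) into (δ₃,φ₃). Consequently quasi-Lie bialgebra structures on 𝔤 with twists as morphisms form a groupoid, with the inverse of a twist λ given by -λ. -/
import Mathlib


/-!
STATEMENT 3: Twists of quasi-Lie bialgebra structures compose additively, the zero twist
is the identity, and the inverse of a twist `λ` is `-λ`; consequently quasi-Lie bialgebra
structures on `𝔤` with twists as morphisms form a groupoid.

Coordinates as in the quasi-Lie bialgebra framework: structure constants `f`,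
cobracket components `δ p i j`, trivector components `φ i j l`, bivector `λ i j`.
-/

open Finset

variable {k ι : Type*}

/-- Antisymmetry of structure constants. -/
def LieAntisymm [Field k] (f : ι → ι → ι → k) : Prop :=
  ∀ i j l, f i j l = - f j i l

/-- Jacobi identity for structure constants. -/
def LieJacobi [Field k] [Fintype ι] (f : ι → ι → ι → k) : Prop :=
  ∀ i j l m, ∑ a, (f i j a * f a l m + f j l a * f a i m + f l i a * f a j m) = 0

/-- Components of the Chevalley–Eilenberg differential `(d_CE δ)(e_p, e_q)^{ij}` of a
`∧²𝔤`-valued 1-cochain `δ` (adjoint action coefficients), i.e.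
`e_p·δ(e_q) - e_q·δ(e_p) - δ(⁅e_p,e_q⁆)`. -/
def dCEone [Field k] [Fintype ι] (f δ : ι → ι → ι → k) (p q i j : ι) : k :=
  (∑ a, (f p a i * δ q a j + f p a j * δ q i a))
    - (∑ a, (f q a i * δ p a j + f q a j * δ p i a))
    - (∑ a, f p q a * δ a i j)

/-- Components of the Chevalley–Eilenberg differential `(d_CE λ)(e_p)^{ij} = (e_p·λ)^{ij}`
of a `∧²𝔤`-valued 0-cochain (bivector) `λ`. -/
def dCEtwo [Field k] [Fintype ι] (f : ι → ι → ι → k) (lam : ι → ι → k) (p i j : ι) : k :=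
  ∑ a, (f p a i * lam a j + f p a j * lam i a)

/-- Components of the adjoint action `(e_p · φ)^{ijl}` of `𝔤` on a trivector `φ ∈ ∧³𝔤`;
this is `(d_CE φ)(e_p)` for the 0-cochain `φ`. -/
def adActTri [Field k] [Fintype ι] (f : ι → ι → ι → k) (φ : ι → ι → ι → k)
    (p i j l : ι) : k :=
  ∑ a, (f p a i * φ a j l + f p a j * φ i a l + f p a l * φ i j a)

/-- Components of the co-Jacobiator `(1/2)[δ,δ](e_p)^{ijl}`: the cyclic sum of
`(δ ⊗ id) ∘ δ`. -/
def coJac [Field k] [Fintype ι] (δ : ι → ι → ι → k) (p i j l : ι) : k :=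
  ∑ a, (δ p a l * δ a i j + δ p a i * δ a j l + δ p a j * δ a l i)

/-- Components of the big bracket `[δ, λ]^{ijl}` of a cobracket `δ` with a bivector `λ`
(contraction of the `𝔤*`-leg of `δ` with one leg of `λ`, wedged). -/
def bigBr [Field k] [Fintype ι] (δ : ι → ι → ι → k) (lam : ι → ι → k) (i j l : ι) : k :=
  ∑ a, (lam a i * δ a j l + lam a j * δ a l i + lam a l * δ a i j)

/-- Components of `(1/2)⟦λ,λ⟧^{ijl}`, the (halved) algebraic Schouten bracket of the
bivector `λ` with itself. -/
def halfSch [Field k] [Fintype ι] (f : ι → ι → ι → k) (lam : ι → ι → k) (i j l : ι) : k :=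
  ∑ a, ∑ b, (lam a i * lam b j * f a b l + lam a j * lam b l * f a b i
      + lam a l * lam b i * f a b j)

/-- Components of the big bracket `[δ, φ]` of a cobracket with a trivector: the full
antisymmetrization (over `S₄`) of the contraction `∑ a, δ a i j * φ a l m`. -/
def bigBrTri [Field k] [Fintype ι] (δ φ : ι → ι → ι → k) (i j l m : ι) : k :=
  ∑ σ : Equiv.Perm (Fin 4),
    ((Equiv.Perm.sign σ : ℤ) : k) *
      ∑ a, δ a (![i, j, l, m] (σ 0)) (![i, j, l, m] (σ 1))
        * φ a (![i, j, l, m] (σ 2)) (![i, j, l, m] (σ 3))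

/-- A quasi-Lie bialgebra structure `(δ, φ)` on the Lie algebra with structure constants
`f`: `δ` and `φ` are antisymmetric, `d_CE δ = 0`, `(1/2)[δ,δ] + d_CE φ = 0` and
`[δ, φ] = 0`. -/
def IsQuasiLieBialgebra [Field k] [Fintype ι] (f δ φ : ι → ι → ι → k) : Prop :=
  (∀ p i j, δ p i j = - δ p j i) ∧
  (∀ i j l, φ i j l = - φ j i l) ∧ (∀ i j l, φ i j l = - φ i l j) ∧
  (∀ p q i j, dCEone f δ p q i j = 0) ∧
  (∀ p i j l, coJac δ p i j l + adActTri f φ p i j l = 0) ∧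
  (∀ i j l m, bigBrTri δ φ i j l m = 0)


/-- `λ` twists the quasi-Lie bialgebra structure `(δ₁, φ₁)` into `(δ₂, φ₂)`:
`δ₂ = δ₁ + d_CE λ` and `φ₂ = φ₁ + [δ₁, λ] - (1/2)⟦λ,λ⟧`. -/
def IsTwist [Field k] [Fintype ι] (f δ₁ φ₁ δ₂ φ₂ : ι → ι → ι → k)
    (lam : ι → ι → k) : Prop :=
  (∀ p i j, δ₂ p i j = δ₁ p i j + dCEtwo f lam p i j) ∧
  (∀ i j l, φ₂ i j l = φ₁ i j l + bigBr δ₁ lam i j l - halfSch f lam i j l)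


section Helpers

private lemma sum_skew [Field k] [CharZero k] [Fintype ι] (g : ι → ι → k)
    (h : ∀ a b, g a b = - g b a) : ∑ a, ∑ b, g a b = 0 := by
  have h2 : ∑ a, ∑ b, g b a = ∑ a, ∑ b, g a b := Finset.sum_comm
  have h4 : ∑ a, ∑ b, g a b = - ∑ a, ∑ b, g b a := by
    rw [← Finset.sum_neg_distrib]
    exact Finset.sum_congr rfl fun a _ => by
      rw [← Finset.sum_neg_distrib]
      exact Finset.sum_congr rfl fun b _ => h a b
  rw [h2] at h4
  linear_combination h4 / 2

private lemma dCEtwo_add [Field k] [Fintype ι] (f : ι → ι → ι → k) (lam mu : ι → ι → k)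
    (p i j : ι) :
    dCEtwo f (fun a b => lam a b + mu a b) p i j
      = dCEtwo f lam p i j + dCEtwo f mu p i j := by
  unfold dCEtwo
  rw [← Finset.sum_add_distrib]
  exact Finset.sum_congr rfl fun a _ => by ring

private lemma dCEtwo_neg [Field k] [Fintype ι] (f : ι → ι → ι → k) (lam : ι → ι → k)
    (p i j : ι) :
    dCEtwo f (fun a b => - lam a b) p i j = - dCEtwo f lam p i j := by
  unfold dCEtwo
  rw [← Finset.sum_neg_distrib]
  exact Finset.sum_congr rfl fun a _ => by ring

private lemma bigBr_delta_add [Field k] [Fintype ι] (δ₁ δ₂ d : ι → ι → ι → k)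
    (lam : ι → ι → k) (h : ∀ p i j, δ₂ p i j = δ₁ p i j + d p i j) (i j l : ι) :
    bigBr δ₂ lam i j l = bigBr δ₁ lam i j l + bigBr d lam i j l := by
  unfold bigBr
  rw [← Finset.sum_add_distrib]
  exact Finset.sum_congr rfl fun a _ => by rw [h, h, h]; ring

private lemma bigBr_lam_add [Field k] [Fintype ι] (δ : ι → ι → ι → k) (lam mu : ι → ι → k)
    (i j l : ι) :
    bigBr δ (fun a b => lam a b + mu a b) i j l = bigBr δ lam i j l + bigBr δ mu i j l := by
  unfold bigBr
  rw [← Finset.sum_add_distrib]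
  exact Finset.sum_congr rfl fun a _ => by ring

private lemma bigBr_lam_neg [Field k] [Fintype ι] (δ : ι → ι → ι → k) (lam : ι → ι → k)
    (i j l : ι) :
    bigBr δ (fun a b => - lam a b) i j l = - bigBr δ lam i j l := by
  unfold bigBr
  rw [← Finset.sum_neg_distrib]
  exact Finset.sum_congr rfl fun a _ => by ring

private lemma halfSch_neg [Field k] [Fintype ι] (f : ι → ι → ι → k) (lam : ι → ι → k)
    (i j l : ι) :
    halfSch f (fun a b => - lam a b) i j l = halfSch f lam i j l := by
  unfold halfSch
  exact Finset.sum_congr rfl fun a _ => Finset.sum_congr rfl fun b _ => by ring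

private lemma halfSch_double [Field k] [Fintype ι] (f : ι → ι → ι → k) (lam : ι → ι → k)
    (i j l : ι) :
    halfSch f (fun a b => lam a b + lam a b) i j l = 4 * halfSch f lam i j l := by
  unfold halfSch
  rw [Finset.mul_sum]
  exact Finset.sum_congr rfl fun a _ => by
    rw [Finset.mul_sum]
    exact Finset.sum_congr rfl fun b _ => by ring

/-- The key quadratic identity: the big bracket of `d_CE λ` with `μ` equals minus the
cross term of the Schouten square. -/
private lemma key_identity [Field k] [CharZero k] [Fintype ι] (f : ι → ι → ι → k)
    (hf : LieAntisymm f) (lam mu : ι → ι → k) (hlam : ∀ i j, lam i j = - lam j i)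
    (i j l : ι) :
    bigBr (dCEtwo f lam) mu i j l
      + (halfSch f (fun a b => lam a b + mu a b) i j l
          - halfSch f lam i j l - halfSch f mu i j l) = 0 := by
  unfold bigBr dCEtwo halfSch
  simp_rw [Finset.mul_sum, ← Finset.sum_add_distrib, ← Finset.sum_sub_distrib,
    ← Finset.sum_add_distrib]
  apply sum_skew
  intro a b
  rw [hf b a i, hf b a j, hf b a l, hlam j b, hlam l b, hlam i b, hlam j a, hlam l a,
    hlam i a]
  ring

end Helpers

/-- Functoriality of twisting: if `λ` twists `(δ₁,φ₁)` into `(δ₂,φ₂)` and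
`μ` twists `(δ₂,φ₂)` into `(δ₃,φ₃)`, then `λ + μ` twists `(δ₁,φ₁)` into `(δ₃,φ₃)`;
the zero bivector twists every structure into itself; and `-λ` twists `(δ₂,φ₂)` back into
`(δ₁,φ₁)`.  Hence quasi-Lie bialgebra structures with twists as morphisms form a
groupoid, with the inverse of `λ` given by `-λ`. -/
theorem twist_comp_zero_inv [Field k] [CharZero k] [Fintype ι] [DecidableEq ι]
    (f : ι → ι → ι → k) (hf₁ : LieAntisymm f) (hf₂ : LieJacobi f) :
    (∀ (δ₁ φ₁ δ₂ φ₂ δ₃ φ₃ : ι → ι → ι → k) (lam mu : ι → ι → k),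
        IsQuasiLieBialgebra f δ₁ φ₁ →
        (∀ i j, lam i j = - lam j i) → (∀ i j, mu i j = - mu j i) →
        IsTwist f δ₁ φ₁ δ₂ φ₂ lam → IsTwist f δ₂ φ₂ δ₃ φ₃ mu →
        IsTwist f δ₁ φ₁ δ₃ φ₃ (fun i j => lam i j + mu i j)) ∧
    (∀ (δ φ : ι → ι → ι → k), IsQuasiLieBialgebra f δ φ →
        IsTwist f δ φ δ φ (fun _ _ => (0 : k))) ∧
    (∀ (δ₁ φ₁ δ₂ φ₂ : ι → ι → ι → k) (lam : ι → ι → k),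
        IsQuasiLieBialgebra f δ₁ φ₁ → (∀ i j, lam i j = - lam j i) →
        IsTwist f δ₁ φ₁ δ₂ φ₂ lam →
        IsTwist f δ₂ φ₂ δ₁ φ₁ (fun i j => - lam i j))     := by
  refine ⟨?_, ?_, ?_⟩
  · -- composition of twists
    rintro δ₁ φ₁ δ₂ φ₂ δ₃ φ₃ lam mu _hq hlam hmu ⟨hδ₁₂, hφ₁₂⟩ ⟨hδ₂₃, hφ₂₃⟩
    constructor
    · intro p i j
      rw [hδ₂₃, hδ₁₂, dCEtwo_add]
      ring
    · intro i j l
      have hbr := bigBr_delta_add δ₁ δ₂ (dCEtwo f lam) mu hδ₁₂ i j l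
      have hkey := key_identity f hf₁ lam mu hlam i j l
      rw [hφ₂₃, hφ₁₂, hbr, bigBr_lam_add]
      linear_combination hkey
  · -- zero twist is the identity
    intro δ φ _hq
    constructor
    · intro p i j
      simp [dCEtwo]
    · intro i j l
      simp [bigBr, halfSch]
  · -- inverse twist
    rintro δ₁ φ₁ δ₂ φ₂ lam _hq hlam ⟨hδ, hφ⟩
    constructor
    · intro p i j
      rw [dCEtwo_neg, hδ]
      ring
    · intro i j l
      have hbr := bigBr_delta_add δ₁ δ₂ (dCEtwo f lam) lam hδ i j l
      have hkey := key_identity f hf₁ lam lam hlam i j l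
      have hdouble := halfSch_double f lam i j l
      rw [bigBr_lam_neg, halfSch_neg, hφ, hbr]
      linear_combination hkey - hdouble
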